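/- Let F be a field of characteristic 2. Then M_2(F) is not strongly Lie solvable: no term of the series δ^(0)(A) = A, δ^(n+1)(A) = [δ^(n)(A), δ^(n)(A)]·A vanishes. -/
import Mathlib


/-- The strong Lie derived series of a unital associative algebra `A` over a field `F`:
`δ⁽⁰⁾(A) = A`, and `δ⁽ⁿ⁺¹⁾(A)` is the two-sided ideal generated by the products
`(xy - yx)·w` with `x, y ∈ δ⁽ⁿ⁾(A)` and `w ∈ A` (realized as the linear span of all
`a·((xy - yx)·w)·b`). -/
def strongLieDerivedSeries (F A : Type*) [Field F] [Ring A] [Algebra F A] :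
    ℕ → Submodule F A
  | 0 => ⊤
  | n + 1 => Submodule.span F
      {z : A | ∃ x ∈ strongLieDerivedSeries F A n, ∃ y ∈ strongLieDerivedSeries F A n,
        ∃ w a b : A, z = a * ((x * y - y * x) * w) * b}

lemma char2_comm_eq_one (F : Type*) [Field F] [CharP F 2] :
    (Matrix.single 0 1 1 : Matrix (Fin 2) (Fin 2) F) * Matrix.single 1 0 1
      - Matrix.single 1 0 1 * Matrix.single 0 1 1 = 1 := by
  ext i j
  fin_cases i <;> fin_cases j <;>
    simp [Matrix.mul_apply, Matrix.single, Matrix.one_apply, Fin.sum_univ_two,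
      CharTwo.neg_eq]

lemma sls_top (F : Type*) [Field F] [CharP F 2] (n : ℕ) :
    strongLieDerivedSeries F (Matrix (Fin 2) (Fin 2) F) n = ⊤ := by
  induction n with
  | zero => rfl
  | succ n ih =>
    rw [strongLieDerivedSeries, eq_top_iff]
    intro z _
    apply Submodule.subset_span
    exact ⟨Matrix.single 0 1 1, ih ▸ Submodule.mem_top,
      Matrix.single 1 0 1, ih ▸ Submodule.mem_top, z, 1, 1,
      by rw [char2_comm_eq_one, one_mul, one_mul, mul_one]⟩

/-- Over a field of characteristic 2, the algebra `M₂(F)` is **not** strongly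
Lie solvable: no term of the strong Lie derived series vanishes. -/
theorem m2_not_strongly_lie_solvable (F : Type*) [Field F] [CharP F 2] :
    ∀ n : ℕ, strongLieDerivedSeries F (Matrix (Fin 2) (Fin 2) F) n ≠ ⊥ := by
  intro n
  rw [sls_top]
  intro h
  have : (1 : Matrix (Fin 2) (Fin 2) F) = 0 := by
    have := h ▸ (Submodule.mem_top : (1 : Matrix (Fin 2) (Fin 2) F) ∈ ⊤)
    simpa using this
  exact one_ne_zero this
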